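/- (Pareto-optimality of the 2-step, 3-round DGX-1 Allgather.) Every valid algorithm for the Allgather collective with C ≥ 1 chunks per node on the DGX-1 topology that uses exactly S = 2 steps satisfies 2·R ≥ 3·C for its total rounds R (i.e., no 2-step Allgather on DGX-1 has bandwidth cost R/C below 3/2). -/

import Mathlib

/-- The set-valued run of a candidate `T`: `V_0 = pre`,
`V_{s+1} = V_s ∪ {(c,n') : ∃ n, (c,n) ∈ V_s ∧ (c,n,n',s) ∈ T}`. -/
def stepRun {G P S : ℕ} (pre : Set (Fin G × Fin P))
    (T : Finset (Fin G × Fin P × Fin P × Fin S)) : ℕ → Set (Fin G × Fin P)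
  | 0 => pre
  | s + 1 =>
      stepRun pre T s ∪
        {q | ∃ n, (q.1, n) ∈ stepRun pre T s ∧ ∃ h : s < S, (q.1, n, q.2, ⟨s, h⟩) ∈ T}

/-- `T` with round sequence `r` is a valid algorithm for `(cap, pre, post)`:
(i) every send is of a chunk present at its source, (ii) the postcondition holds
after step `S`, (iii) for every step `s` and pair `(n,n')` the number of chunks sent
from `n` to `n'` at step `s` is at most `cap n n' * r s`. -/
def ValidAlgo {G P S : ℕ} (cap : Fin P → Fin P → ℕ) (pre post : Set (Fin G × Fin P))
    (T : Finset (Fin G × Fin P × Fin P × Fin S)) (r : Fin S → ℕ) : Prop :=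
  (∀ c n n' s, (c, n, n', s) ∈ T → (c, n) ∈ stepRun pre T (s : ℕ)) ∧
  post ⊆ stepRun pre T S ∧
  ∀ s n n',
    (T.filter fun x => x.2.1 = n ∧ x.2.2.1 = n' ∧ x.2.2.2 = s).card ≤ cap n n' * r s

/-- Allgather precondition with `C` chunks per node (`G = C*P`):
chunk `c` initially resides exactly on node `c mod P`. -/
def agPre (C P : ℕ) : Set (Fin (C * P) × Fin P) := {q | (q.1 : ℕ) % P = (q.2 : ℕ)}

/-- The DGX-1 topology on 8 GPUs: capacity 2 in both directions on the undirected edges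
{0,1},{1,4},{4,5},{5,6},{6,7},{2,7},{2,3},{0,3}; capacity 1 in both directions on
{0,2},{1,2},{1,3},{3,6},{4,6},{4,7},{5,7},{0,5}; capacity 0 otherwise. -/
def dgx1cap (n n' : Fin 8) : ℕ :=
  if ((n, n') ∈ ([(0,1),(1,4),(4,5),(5,6),(6,7),(2,7),(2,3),(0,3)] : List (Fin 8 × Fin 8))
      ∨ (n', n) ∈ ([(0,1),(1,4),(4,5),(5,6),(6,7),(2,7),(2,3),(0,3)] : List (Fin 8 × Fin 8)))
  then 2
  else if ((n, n') ∈ ([(0,2),(1,2),(1,3),(3,6),(4,6),(4,7),(5,7),(0,5)] : List (Fin 8 × Fin 8))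
      ∨ (n', n) ∈ ([(0,2),(1,2),(1,3),(3,6),(4,6),(4,7),(5,7),(0,5)] : List (Fin 8 × Fin 8)))
  then 1 else 0

/-- Pareto-optimality of the 2-step, 3-round DGX-1 Allgather: every valid 2-step Allgather
algorithm on DGX-1 with `C ≥ 1` chunks per node has total rounds `R` with `2R ≥ 3C`. -/
theorem dgx1_allgather_two_step_round_bound (C : ℕ) (hC : 1 ≤ C)
    (T : Finset (Fin (C * 8) × Fin 8 × Fin 8 × Fin 2)) (r : Fin 2 → ℕ)
    (h : ValidAlgo dgx1cap (agPre C 8) Set.univ T r) :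
    3 * C ≤ 2 * ∑ s, r s := by
  classical
  obtain ⟨hsrc, hpost, hcap⟩ := h
  -- no sends on zero-capacity edges
  have hzero : ∀ (c : Fin (C*8)) (n n' : Fin 8) (s : Fin 2),
      (c, n, n', s) ∈ T → dgx1cap n n' ≠ 0 := by
    intro c n n' s hx h0
    have hle := hcap s n n'
    rw [h0, Nat.zero_mul, Nat.le_zero, Finset.card_eq_zero] at hle
    have hmem : (c, n, n', s) ∈ T.filter
        (fun x => x.2.1 = n ∧ x.2.2.1 = n' ∧ x.2.2.2 = s) :=
      Finset.mem_filter.mpr ⟨hx, rfl, rfl, rfl⟩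
    rw [hle] at hmem
    exact absurd hmem (Finset.notMem_empty _)
  set A := T.filter (fun x => x.2.1 = 5 ∧ x.2.2.1 = 0 ∧ x.2.2.2 = (0:Fin 2)) with hA
  set B := T.filter (fun x => x.2.1 = 6 ∧ x.2.2.1 = 3 ∧ x.2.2.2 = (0:Fin 2)) with hB
  set D := T.filter (fun x => x.2.1 = 2 ∧ x.2.2.1 = 0 ∧ x.2.2.2 = (1:Fin 2)) with hD
  set E := T.filter (fun x => x.2.1 = 5 ∧ x.2.2.1 = 0 ∧ x.2.2.2 = (1:Fin 2)) with hE
  have inA : ∀ {x}, x ∈ A → x ∈ A ∪ B ∪ D ∪ E := fun hx =>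
    Finset.mem_union_left _ (Finset.mem_union_left _ (Finset.mem_union_left _ hx))
  have inB : ∀ {x}, x ∈ B → x ∈ A ∪ B ∪ D ∪ E := fun hx =>
    Finset.mem_union_left _ (Finset.mem_union_left _ (Finset.mem_union_right _ hx))
  have inD : ∀ {x}, x ∈ D → x ∈ A ∪ B ∪ D ∪ E := fun hx =>
    Finset.mem_union_left _ (Finset.mem_union_right _ hx)
  have inE : ∀ {x}, x ∈ E → x ∈ A ∪ B ∪ D ∪ E := fun hx =>
    Finset.mem_union_right _ hx
  have hn40 : ∀ m : Fin 8, dgx1cap m 0 ≠ 0 → m = 1 ∨ m = 2 ∨ m = 3 ∨ m = 5 := by decide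
  have key : ∀ c : Fin (C*8), (c:ℕ) % 8 = 5 ∨ (c:ℕ) % 8 = 6 ∨ (c:ℕ) % 8 = 7 →
      ∃ x ∈ A ∪ B ∪ D ∪ E, x.1 = c := by
    intro c hc
    have h2 := hpost (Set.mem_univ (c, (0:Fin 8)))
    simp only [stepRun, Set.mem_union, Set.mem_setOf_eq] at h2
    rcases h2 with (h0 | ⟨n, hn, hlt0, hs0⟩) | ⟨n, hn1, hlt1, hs1⟩
    · -- (c,0) ∈ pre : impossible
      have h0' : (c:ℕ) % 8 = 0 := h0
      rcases hc with hc | hc | hc <;> omega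
    · -- step-0 send from origin to 0
      have hval : (c:ℕ) % 8 = (n:ℕ) := hn
      rcases hc with hc | hc | hc
      · have hn5 : n = 5 := by apply Fin.ext; show (n:ℕ) = 5; omega
        subst hn5
        exact ⟨(c, 5, 0, ⟨0, hlt0⟩), inA (by rw [hA]; exact Finset.mem_filter.mpr ⟨hs0, rfl, rfl, rfl⟩), rfl⟩
      · have h6 : (n:ℕ) = 6 := by omega
        rcases hn40 n (hzero c n 0 _ hs0) with rfl | rfl | rfl | rfl <;>
          exact absurd h6 (by decide)
      · have h7 : (n:ℕ) = 7 := by omega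
        rcases hn40 n (hzero c n 0 _ hs0) with rfl | rfl | rfl | rfl <;>
          exact absurd h7 (by decide)
    · -- step-1 send into 0 from holder n
      have hn4 := hn40 n (hzero c n 0 _ hs1)
      rcases hn1 with hn | ⟨n', hn', hlt0, hs0⟩
      · -- holder is the origin itself
        have hval : (c:ℕ) % 8 = (n:ℕ) := hn
        rcases hc with hc | hc | hc
        · have h5 : (n:ℕ) = 5 := by omega
          rcases hn4 with rfl | rfl | rfl | rfl
          · exact absurd h5 (by decide)
          · exact absurd h5 (by decide)
          · exact absurd h5 (by decide)
          · exact ⟨(c, 5, 0, ⟨1, hlt1⟩), inE (by rw [hE]; exact Finset.mem_filter.mpr ⟨hs1, rfl, rfl, rfl⟩), rfl⟩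
        · have h6 : (n:ℕ) = 6 := by omega
          rcases hn4 with rfl | rfl | rfl | rfl <;> exact absurd h6 (by decide)
        · have h7 : (n:ℕ) = 7 := by omega
          rcases hn4 with rfl | rfl | rfl | rfl <;> exact absurd h7 (by decide)
      · -- holder n got the chunk from origin n' at step 0
        have hval : (c:ℕ) % 8 = (n':ℕ) := hn'
        have hcap0 := hzero c n' n _ hs0
        rcases hc with hc | hc | hc
        · -- origin 5 : no step-0 edge from 5 into {1,2,3,5}
          have hn'5 : n' = 5 := by apply Fin.ext; show (n':ℕ) = 5; omega
          subst hn'5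
          rcases hn4 with rfl | rfl | rfl | rfl <;> exact absurd hcap0 (by decide)
        · -- origin 6 : n = 3 gives B, n = 5 gives E
          have hn'6 : n' = 6 := by apply Fin.ext; show (n':ℕ) = 6; omega
          subst hn'6
          rcases hn4 with rfl | rfl | rfl | rfl
          · exact absurd hcap0 (by decide)
          · exact absurd hcap0 (by decide)
          · exact ⟨(c, 6, 3, ⟨0, hlt0⟩), inB (by rw [hB]; exact Finset.mem_filter.mpr ⟨hs0, rfl, rfl, rfl⟩), rfl⟩
          · exact ⟨(c, 5, 0, ⟨1, hlt1⟩), inE (by rw [hE]; exact Finset.mem_filter.mpr ⟨hs1, rfl, rfl, rfl⟩), rfl⟩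
        · -- origin 7 : n = 2 gives D, n = 5 gives E
          have hn'7 : n' = 7 := by apply Fin.ext; show (n':ℕ) = 7; omega
          subst hn'7
          rcases hn4 with rfl | rfl | rfl | rfl
          · exact absurd hcap0 (by decide)
          · exact ⟨(c, 2, 0, ⟨1, hlt1⟩), inD (by rw [hD]; exact Finset.mem_filter.mpr ⟨hs1, rfl, rfl, rfl⟩), rfl⟩
          · exact absurd hcap0 (by decide)
          · exact ⟨(c, 5, 0, ⟨1, hlt1⟩), inE (by rw [hE]; exact Finset.mem_filter.mpr ⟨hs1, rfl, rfl, rfl⟩), rfl⟩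
  -- counting
  have hcount : 3 * C ≤ ((A ∪ B ∪ D ∪ E).image Prod.fst).card := by
    have hinj : ∀ p ∈ (Finset.univ : Finset (Fin C × Fin 3)), ∀ q ∈ (Finset.univ : Finset (Fin C × Fin 3)),
        (fun p : Fin C × Fin 3 => (⟨(p.1 : ℕ) * 8 + 5 + (p.2 : ℕ), by
          have h1 := p.1.isLt; have h2 := p.2.isLt; omega⟩ : Fin (C*8))) p =
        (fun p : Fin C × Fin 3 => (⟨(p.1 : ℕ) * 8 + 5 + (p.2 : ℕ), by
          have h1 := p.1.isLt; have h2 := p.2.isLt; omega⟩ : Fin (C*8))) q → p = q := by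
      intro p _ q _ hpq
      have hv : ((p.1 : ℕ) * 8 + 5 + (p.2 : ℕ) : ℕ) = (q.1 : ℕ) * 8 + 5 + (q.2 : ℕ) :=
        congrArg Fin.val hpq
      have h1 := p.1.isLt; have h2 := p.2.isLt; have h3 := q.1.isLt; have h4 := q.2.isLt
      have e1 : (p.1 : ℕ) = q.1 := by omega
      have e2 : (p.2 : ℕ) = q.2 := by omega
      exact Prod.ext (Fin.ext e1) (Fin.ext e2)
    have hmaps : ∀ p ∈ (Finset.univ : Finset (Fin C × Fin 3)),
        (⟨(p.1 : ℕ) * 8 + 5 + (p.2 : ℕ), by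
          have h1 := p.1.isLt; have h2 := p.2.isLt; omega⟩ : Fin (C*8)) ∈
          (A ∪ B ∪ D ∪ E).image Prod.fst := by
      intro p _
      have h2 := p.2.isLt
      obtain ⟨x, hx, hxe⟩ := key ⟨(p.1 : ℕ) * 8 + 5 + (p.2 : ℕ), by
          have h1 := p.1.isLt; omega⟩ (by
        simp only [Fin.val_mk]
        omega)
      exact Finset.mem_image.mpr ⟨x, hx, hxe⟩
    calc 3 * C = (Finset.univ : Finset (Fin C × Fin 3)).card := by
            simp [Finset.card_univ]; ring
      _ ≤ ((A ∪ B ∪ D ∪ E).image Prod.fst).card :=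
            Finset.card_le_card_of_injOn _ hmaps hinj
  have hAc : A.card ≤ r 0 := by have := hcap 0 5 0; simpa [show dgx1cap 5 0 = 1 by decide] using this
  have hBc : B.card ≤ r 0 := by have := hcap 0 6 3; simpa [show dgx1cap 6 3 = 1 by decide] using this
  have hDc : D.card ≤ r 1 := by have := hcap 1 2 0; simpa [show dgx1cap 2 0 = 1 by decide] using this
  have hEc : E.card ≤ r 1 := by have := hcap 1 5 0; simpa [show dgx1cap 5 0 = 1 by decide] using this
  have himg : ((A ∪ B ∪ D ∪ E).image Prod.fst).card ≤ A.card + B.card + D.card + E.card :=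
    le_trans (Finset.card_image_le) (le_trans (Finset.card_union_le _ _)
      (le_trans (Nat.add_le_add_right (Finset.card_union_le _ _) _)
        (by have := Finset.card_union_le A B; omega)))
  have hsum : ∑ s, r s = r 0 + r 1 := Fin.sum_univ_two r
  omega
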